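/- Let A be a maximal dissipative operator on a complex Hilbert space H. Then there exists a complex Hilbert space E and a linear operator Γ : D(A) → E which is bounded with respect to the graph norm of A and has dense range in E, such that ⟨Au,v⟩_H − ⟨u,Av⟩_H = i⟨Γu,Γv⟩_E for all u,v ∈ D(A). Similarly, there exists a complex Hilbert space E_* and a linear operator Γ_* : D(A*) → E_* which is bounded with respect to the graph norm of A* and has dense range in E_*, such that ⟨A*u,v⟩_H − ⟨u,A*v⟩_H = −i⟨Γ_*u,Γ_*v⟩_{E_*} for all u,v ∈ D(A*). -/

import Mathlib

open scoped ComplexInnerProductSpace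

noncomputable section

/-- A maximal dissipative operator on a complex Hilbert space `H`, together with the
(derivable) data of its resolvent on the open lower half-plane and the resolvent of its
adjoint on the open upper half-plane.  Here the inner product `⟪·,·⟫` is conjugate-linear
in the first variable, so that the paper's `⟨x, y⟩` corresponds to `⟪y, x⟫`. -/
structure MDO (H : Type*) [NormedAddCommGroup H] [InnerProductSpace ℂ H]
    [CompleteSpace H] where
  /-- The underlying densely defined operator. -/
  A : H →ₗ.[ℂ] H
  dense_dom : Dense (A.domain : Set H)
  dissipative : ∀ u : A.domain, 0 ≤ (⟪(u : H), A u⟫).im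
  /-- `R z` is the bounded inverse `(A - z)⁻¹`, for `Im z < 0`. -/
  R : ℂ → H →L[ℂ] H
  R_mem : ∀ z, z.im < 0 → ∀ h : H, R z h ∈ A.domain
  R_right : ∀ z (hz : z.im < 0) (h : H), A ⟨R z h, R_mem z hz h⟩ - z • R z h = h
  R_left : ∀ z, z.im < 0 → ∀ u : A.domain, R z (A u - z • (u : H)) = (u : H)
  dense_dom_star : Dense (A.adjoint.domain : Set H)
  anti_dissipative_star : ∀ u : A.adjoint.domain, (⟪(u : H), A.adjoint u⟫).im ≤ 0
  /-- `Rs z` is the bounded inverse `(A* - z)⁻¹`, for `Im z > 0`. -/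
  Rs : ℂ → H →L[ℂ] H
  Rs_mem : ∀ z, 0 < z.im → ∀ h : H, Rs z h ∈ A.adjoint.domain
  Rs_right : ∀ z (hz : 0 < z.im) (h : H),
    A.adjoint ⟨Rs z h, Rs_mem z hz h⟩ - z • Rs z h = h
  Rs_left : ∀ z, 0 < z.im → ∀ u : A.adjoint.domain,
    Rs z (A.adjoint u - z • (u : H)) = (u : H)

/-- The data of a Hilbert space `E` and an operator `Γ : D(T) → E`, bounded in the graph
norm of `T` and with dense range, satisfying the Lagrange identity
`⟨Tu, v⟩ - ⟨u, Tv⟩ = c ⟨Γu, Γv⟩` (written here in the Mathlib inner product convention,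
which is conjugate-linear in the first slot, so the paper's `⟨x,y⟩` is `⟪y,x⟫`). -/
structure LagrangeData {H : Type u} [NormedAddCommGroup H] [InnerProductSpace ℂ H]
    (T : H →ₗ.[ℂ] H) (c : ℂ) : Type (u + 1) where
  E : Type u
  [instN : NormedAddCommGroup E]
  [instI : InnerProductSpace ℂ E]
  [instC : CompleteSpace E]
  Γ : T.domain →ₗ[ℂ] E
  bdd : ∃ C : ℝ, ∀ u : T.domain, ‖Γ u‖ ≤ C * (‖(u : H)‖ + ‖T u‖)
  dense_range : DenseRange Γ
  lagrange : ∀ u v : T.domain, ⟪(v : H), T u⟫ - ⟪T v, (u : H)⟫ = c * ⟪Γ v, Γ u⟫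


namespace Stmt0Aux

universe u

variable {H : Type u} [NormedAddCommGroup H] [InnerProductSpace ℂ H]

/-- Type synonym for the domain of `T`, to carry the boundary seminorm. -/
def BSyn (T : H →ₗ.[ℂ] H) : Type u := T.domain

instance (T : H →ₗ.[ℂ] H) : AddCommGroup (BSyn T) :=
  inferInstanceAs (AddCommGroup T.domain)
instance (T : H →ₗ.[ℂ] H) : Module ℂ (BSyn T) :=
  inferInstanceAs (Module ℂ T.domain)

def BSyn.toD {T : H →ₗ.[ℂ] H} (x : BSyn T) : T.domain := x
def BSyn.of {T : H →ₗ.[ℂ] H} (x : T.domain) : BSyn T := x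

/-- The boundary form `c⁻¹ (⟪x, Ty⟫ - ⟪Tx, y⟫)`. -/
def binner (T : H →ₗ.[ℂ] H) (c : ℂ) (x y : T.domain) : ℂ :=
  c⁻¹ * (⟪(x : H), T y⟫ - ⟪(T x : H), (y : H)⟫)

lemma binner_conj_symm (T : H →ₗ.[ℂ] H) (c : ℂ)
    (hconj : (starRingEnd ℂ) c⁻¹ = -c⁻¹) (x y : T.domain) :
    (starRingEnd ℂ) (binner T c y x) = binner T c x y := by
  simp only [binner, map_mul, hconj, map_sub, inner_conj_symm]
  ring

lemma binner_add_left (T : H →ₗ.[ℂ] H) (c : ℂ) (x y z : T.domain) :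
    binner T c (x + y) z = binner T c x z + binner T c y z := by
  simp only [binner, T.map_add, Submodule.coe_add, inner_add_left]
  ring

lemma binner_smul_left (T : H →ₗ.[ℂ] H) (c : ℂ) (r : ℂ) (x y : T.domain) :
    binner T c (r • x) y = (starRingEnd ℂ) r * binner T c x y := by
  simp only [binner, T.map_smul, Submodule.coe_smul, inner_smul_left]
  ring

/-- The boundary form as a positive-semidefinite hermitian form on the type synonym. -/
def bCore (T : H →ₗ.[ℂ] H) (c : ℂ)
    (hconj : (starRingEnd ℂ) c⁻¹ = -c⁻¹)
    (hnn : ∀ u : T.domain, 0 ≤ (binner T c u u).re) :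
    PreInnerProductSpace.Core ℂ (BSyn T) where
  inner x y := binner T c x.toD y.toD
  conj_inner_symm x y := binner_conj_symm T c hconj x.toD y.toD
  re_inner_nonneg x := hnn x.toD
  add_left x y z := binner_add_left T c x.toD y.toD z.toD
  smul_left x y r := binner_smul_left T c r x.toD y.toD

/-- The general construction of the boundary space:  complete the separation of the
domain endowed with the seminorm coming from the boundary form. -/
def lagrangeData (T : H →ₗ.[ℂ] H) (c : ℂ) (hc0 : c ≠ 0) (hcn : ‖c⁻¹‖ ≤ 1)
    (hconj : (starRingEnd ℂ) c⁻¹ = -c⁻¹)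
    (hnn : ∀ u : T.domain, 0 ≤ (binner T c u u).re) :
    LagrangeData T c := by
  letI cr : PreInnerProductSpace.Core ℂ (BSyn T) := bCore T c hconj hnn
  letI : SeminormedAddCommGroup (BSyn T) :=
    @InnerProductSpace.Core.toSeminormedAddCommGroup ℂ (BSyn T) _ _ _ cr
  letI : NormedSpace ℂ (BSyn T) :=
    @InnerProductSpace.Core.toNormedSpace ℂ (BSyn T) _ _ _ cr
  letI : InnerProductSpace ℂ (BSyn T) :=
    InnerProductSpace.ofCore cr
  letI E := UniformSpace.Completion (BSyn T)
  letI Γ : T.domain →ₗ[ℂ] E :=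
    { toFun := fun u => ((BSyn.of u : BSyn T) : E)
      map_add' := fun u v => UniformSpace.Completion.coe_add (BSyn.of u) (BSyn.of v)
      map_smul' := fun r u => UniformSpace.Completion.coe_smul r (BSyn.of u) }
  have hnorm : ∀ u : T.domain, ‖Γ u‖ = Real.sqrt ((binner T c u u).re) := fun u => by
    have h1 : ‖Γ u‖ = ‖(BSyn.of u : BSyn T)‖ := UniformSpace.Completion.norm_coe _
    rw [h1]; rfl
  refine ⟨E, Γ, ⟨1, fun u => ?_⟩, ?_, fun u v => ?_⟩
  · rw [hnorm u, one_mul]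
    have h2 : (binner T c u u).re ≤ (‖(u : H)‖ + ‖T u‖) ^ 2 := by
      have h3 : (binner T c u u).re ≤ ‖binner T c u u‖ := Complex.re_le_norm _
      have h4 : ‖binner T c u u‖ ≤ 1 * (‖(u : H)‖ * ‖T u‖ + ‖T u‖ * ‖(u : H)‖) := by
        rw [binner, norm_mul]
        gcongr
        calc ‖⟪(u : H), T u⟫ - ⟪(T u : H), (u : H)⟫‖
            ≤ ‖⟪(u : H), T u⟫‖ + ‖⟪(T u : H), (u : H)⟫‖ := norm_sub_le _ _
          _ ≤ ‖(u : H)‖ * ‖T u‖ + ‖T u‖ * ‖(u : H)‖ := by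
              gcongr <;> exact norm_inner_le_norm _ _
      nlinarith [norm_nonneg (u : H), norm_nonneg (T u), h3.trans h4]
    calc Real.sqrt ((binner T c u u).re) ≤ Real.sqrt ((‖(u : H)‖ + ‖T u‖) ^ 2) :=
          Real.sqrt_le_sqrt h2
      _ = ‖(u : H)‖ + ‖T u‖ := by
          rw [Real.sqrt_sq (by positivity)]
  · have hs : Function.Surjective (BSyn.of : T.domain → BSyn T) := fun x => ⟨x, rfl⟩
    have hd : DenseRange (((↑) : BSyn T → E) ∘ (BSyn.of : T.domain → BSyn T)) :=
      UniformSpace.Completion.denseRange_coe.comp hs.denseRange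
        (UniformSpace.Completion.continuous_coe _)
    exact hd
  · have key : (⟪Γ v, Γ u⟫ : ℂ) = binner T c v u := by
      have h := UniformSpace.Completion.inner_coe (𝕜 := ℂ) (E := BSyn T)
        (BSyn.of v) (BSyn.of u)
      exact h.trans rfl
    rw [key, binner, ← mul_assoc, mul_inv_cancel₀ hc0, one_mul]

lemma re_I_inv_mul_sub_conj (z : ℂ) :
    (Complex.I⁻¹ * (z - (starRingEnd ℂ) z)).re = 2 * z.im := by
  simp [Complex.inv_I, Complex.ext_iff, Complex.sub_conj]

lemma re_neg_I_inv_mul_sub_conj (z : ℂ) :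
    ((-Complex.I)⁻¹ * (z - (starRingEnd ℂ) z)).re = -(2 * z.im) := by
  simp [Complex.inv_I, Complex.ext_iff, Complex.sub_conj]

end Stmt0Aux

/-- For a maximal dissipative operator `A` there exist a Hilbert space `E`
and an operator `Γ : D(A) → E`, bounded in the graph norm with dense range, with
`⟨Au,v⟩ - ⟨u,Av⟩ = i⟨Γu,Γv⟩`; and similarly a Hilbert space `E_*` and
`Γ_* : D(A*) → E_*` with `⟨A*u,v⟩ - ⟨u,A*v⟩ = -i⟨Γ_*u,Γ_*v⟩`. -/
theorem stmt0 {H : Type u} [NormedAddCommGroup H] [InnerProductSpace ℂ H]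
    [CompleteSpace H] (M : MDO H) :
    Nonempty (LagrangeData M.A Complex.I) ∧
      Nonempty (LagrangeData M.A.adjoint (-Complex.I)) := by
  constructor
  · refine ⟨Stmt0Aux.lagrangeData M.A Complex.I Complex.I_ne_zero
      (by simp [Complex.inv_I]) (by simp [Complex.inv_I]) (fun u => ?_)⟩
    have h1 : (⟪(M.A u : H), (u : H)⟫ : ℂ) = (starRingEnd ℂ) ⟪(u : H), M.A u⟫ :=
      (inner_conj_symm _ _).symm
    have h2 := M.dissipative u
    rw [Stmt0Aux.binner, h1, Stmt0Aux.re_I_inv_mul_sub_conj]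
    linarith
  · refine ⟨Stmt0Aux.lagrangeData M.A.adjoint (-Complex.I)
      (by simp [Complex.I_ne_zero]) (by simp [Complex.inv_I])
      (by simp [inv_neg, Complex.inv_I]) (fun u => ?_)⟩
    have h1 : (⟪(M.A.adjoint u : H), (u : H)⟫ : ℂ)
        = (starRingEnd ℂ) ⟪(u : H), M.A.adjoint u⟫ := (inner_conj_symm _ _).symm
    have h2 := M.anti_dissipative_star u
    rw [Stmt0Aux.binner, h1, Stmt0Aux.re_neg_I_inv_mul_sub_conj]
    linarith

end
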